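/- Suppose p(x,y) > 0 for all (x,y), R_x > H_p(x|y), R_y > H_p(y|x), and R_x + R_y > H(p). Then for every γ ∈ [0,1]: sup_{ρ∈[0,1]} [γ·E_{x|y}(R_x,ρ) + (1−γ)·E_{xy}(R_x,R_y,ρ)] = inf over pairs of probability mass functions (q,o) on X×Y of [γ·D(q‖p) + (1−γ)·D(o‖p) + max(0, γ(R_x − H_q(x|y)) + (1−γ)(R_x + R_y − H(o)))]. -/

import Mathlib

open scoped BigOperators

noncomputable section

/-- `q` is a probability mass function on `Z`. -/
def IsPMF {Z : Type*} [Fintype Z] (q : Z → ℝ) : Prop :=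
  (∀ z, 0 ≤ q z) ∧ ∑ z, q z = 1

/-- Shannon entropy in nats. -/
def entropy {Z : Type*} [Fintype Z] (q : Z → ℝ) : ℝ :=
  - ∑ z, q z * Real.log (q z)

/-- Kullback–Leibler divergence in nats. -/
def klDiv {Z : Type*} [Fintype Z] (q p : Z → ℝ) : ℝ :=
  ∑ z, q z * Real.log (q z / p z)

/-- Marginal on the second coordinate. -/
def margY {X Y : Type*} [Fintype X] (q : X × Y → ℝ) : Y → ℝ := fun y => ∑ x, q (x, y)

/-- Marginal on the first coordinate. -/
def margX {X Y : Type*} [Fintype Y] (q : X × Y → ℝ) : X → ℝ := fun x => ∑ y, q (x, y)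

/-- Conditional entropy `H_q(x|y) = H(q) − H(q_Y)`. -/
def condEntXY {X Y : Type*} [Fintype X] [Fintype Y] (q : X × Y → ℝ) : ℝ :=
  entropy q - entropy (margY q)

/-- Conditional entropy `H_q(y|x) = H(q) − H(q_X)`. -/
def condEntYX {X Y : Type*} [Fintype X] [Fintype Y] (q : X × Y → ℝ) : ℝ :=
  entropy q - entropy (margX q)

/-- `E_{xy}(R_x,R_y,ρ)`. -/
def Exy {X Y : Type*} [Fintype X] [Fintype Y] (p : X × Y → ℝ) (Rx Ry ρ : ℝ) : ℝ :=
  ρ * (Rx + Ry) - (1 + ρ) * Real.log (∑ z : X × Y, p z ^ (1 / (1 + ρ)))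

/-- `E_{x|y}(R_x,ρ)`. -/
def Exgy {X Y : Type*} [Fintype X] [Fintype Y] (p : X × Y → ℝ) (Rx ρ : ℝ) : ℝ :=
  ρ * Rx - Real.log (∑ y, (∑ x, p (x, y) ^ (1 / (1 + ρ))) ^ (1 + ρ))

lemma sub_le_mul_log_div (a c : ℝ) (ha : 0 ≤ a) (hc : 0 < c) :
    a - c ≤ a * Real.log (a / c) := by
  rcases eq_or_lt_of_le ha with h | h
  · simp [← h]; positivity
  · have h1 : Real.log (c / a) ≤ c / a - 1 :=
      Real.log_le_sub_one_of_pos (by positivity)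
    have h2 : Real.log (c / a) = - Real.log (a / c) := by
      rw [← Real.log_inv]; congr 1; field_simp
    have h3 := mul_le_mul_of_nonneg_left h1 h.le
    have h4 : a * (c / a - 1) = c - a := by field_simp
    rw [h2, h4] at h3; linarith

lemma log_sum_ineq {Z : Type*} [Fintype Z] (a b : Z → ℝ)
    (ha : ∀ z, 0 ≤ a z) (hb : ∀ z, 0 < b z) :
    (∑ z, a z) * Real.log ((∑ z, a z) / (∑ z, b z)) ≤ ∑ z, a z * Real.log (a z / b z) := by
  classical
  set s := ∑ z, a z with hs
  set s' := ∑ z, b z with hs'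
  rcases isEmpty_or_nonempty Z with hZ | hZ
  · simp [hs, hs']
  have hs'pos : 0 < s' := Finset.sum_pos (fun z _ => hb z) Finset.univ_nonempty
  have hsnn : 0 ≤ s := Finset.sum_nonneg fun z _ => ha z
  rcases eq_or_lt_of_le hsnn with h0 | h0
  · have hz : ∀ z ∈ Finset.univ, a z = 0 :=
      (Finset.sum_eq_zero_iff_of_nonneg (fun z _ => ha z)).1 h0.symm
    have : ∀ z, a z = 0 := fun z => hz z (Finset.mem_univ z)
    simp [← h0, this]
  · have key : ∀ z ∈ Finset.univ, a z * Real.log (s / s') + (a z - b z * (s / s')) ≤ a z * Real.log (a z / b z) := by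
      intro z _
      rcases eq_or_lt_of_le (ha z) with h | h
      · have : 0 ≤ b z * (s / s') := mul_nonneg (hb z).le (div_nonneg h0.le hs'pos.le)
        simp [← h]; linarith
      · have hbt : 0 < b z * (s / s') := mul_pos (hb z) (div_pos h0 hs'pos)
        have h1 := sub_le_mul_log_div (a z) (b z * (s / s')) (ha z) hbt
        have h2 : Real.log (a z / (b z * (s / s'))) = Real.log (a z / b z) - Real.log (s / s') := by
          rw [Real.log_div h.ne' hbt.ne', Real.log_div h.ne' (hb z).ne',
            Real.log_mul (hb z).ne' (by positivity : (s / s' : ℝ) ≠ 0)]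
          ring
        rw [h2] at h1
        nlinarith
    have hsum := Finset.sum_le_sum key
    have hL : ∑ z, (a z * Real.log (s / s') + (a z - b z * (s / s'))) = s * Real.log (s / s') := by
      rw [Finset.sum_add_distrib, ← Finset.sum_mul, Finset.sum_sub_distrib, ← Finset.sum_mul]
      rw [← hs, ← hs']
      field_simp
      ring
    rw [hL] at hsum
    exact hsum

-- key pointwise identity
lemma tilt_term {o p ρ : ℝ} (ho : 0 ≤ o) (hp : 0 < p) (hρ : 0 ≤ ρ) :
    o * Real.log (o / p) + ρ * (o * Real.log o) =
      (1 + ρ) * (o * Real.log (o / p ^ (1 / (1 + ρ)))) := by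
  have h1 : (0:ℝ) < 1 + ρ := by linarith
  rcases eq_or_lt_of_le ho with h | h
  · simp [← h]
  · rw [Real.log_div h.ne' hp.ne', Real.log_div h.ne' (Real.rpow_pos_of_pos hp _).ne',
      Real.log_rpow hp]
    field_simp
    ring

lemma lemA_le {X Y : Type*} [Fintype X] [Fintype Y] [Nonempty X] [Nonempty Y]
    (p : X × Y → ℝ) (hpos : ∀ z, 0 < p z) (Rx Ry ρ : ℝ) (hρ : 0 ≤ ρ)
    (o : X × Y → ℝ) (ho : IsPMF o) :
    Exy p Rx Ry ρ ≤ klDiv o p + ρ * ((Rx + Ry) - entropy o) := by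
  have h1 : (0:ℝ) < 1 + ρ := by linarith
  set Z0 : ℝ := ∑ z : X × Y, p z ^ (1 / (1 + ρ)) with hZ0
  have hZ0pos : 0 < Z0 := Finset.sum_pos (fun z _ => Real.rpow_pos_of_pos (hpos z) _)
    Finset.univ_nonempty
  have key : klDiv o p + ρ * (- entropy o) =
      (1 + ρ) * ∑ z, o z * Real.log (o z / p z ^ (1 / (1 + ρ))) := by
    rw [klDiv, entropy, Finset.mul_sum]
    rw [neg_neg, Finset.mul_sum, ← Finset.sum_add_distrib]
    exact Finset.sum_congr rfl fun z _ => tilt_term (ho.1 z) (hpos z) hρ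
  have hls := log_sum_ineq o (fun z => p z ^ (1 / (1 + ρ)))
    ho.1 (fun z => Real.rpow_pos_of_pos (hpos z) _)
  rw [ho.2] at hls
  have : Real.log (1 / Z0) = - Real.log Z0 := by
    rw [one_div, Real.log_inv]
  rw [← hZ0, this, one_mul] at hls
  have h2 : (1 + ρ) * (- Real.log Z0) ≤ (1 + ρ) * ∑ z, o z * Real.log (o z / p z ^ (1 / (1 + ρ))) :=
    mul_le_mul_of_nonneg_left hls h1.le
  rw [← key] at h2
  rw [Exy, ← hZ0]
  linarith

lemma tilt_term2 {a s ρ : ℝ} (ha : 0 ≤ a) (hs : 0 < s) :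
    (1 + ρ) * (a * Real.log (a / s)) - ρ * (a * Real.log a) =
      a * Real.log (a / s ^ (1 + ρ)) := by
  rcases eq_or_lt_of_le ha with h | h
  · simp [← h]
  · rw [Real.log_div h.ne' hs.ne', Real.log_div h.ne' (Real.rpow_pos_of_pos hs _).ne',
      Real.log_rpow hs]
    ring

lemma sum_prod_eq {X Y : Type*} [Fintype X] [Fintype Y] (f : X × Y → ℝ) :
    ∑ z : X × Y, f z = ∑ y, ∑ x, f (x, y) := by
  rw [Fintype.sum_prod_type]
  exact Finset.sum_comm

lemma lemB_le {X Y : Type*} [Fintype X] [Fintype Y] [Nonempty X] [Nonempty Y]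
    (p : X × Y → ℝ) (hpos : ∀ z, 0 < p z) (Rx ρ : ℝ) (hρ : 0 ≤ ρ)
    (q : X × Y → ℝ) (hq : IsPMF q) :
    Exgy p Rx ρ ≤ klDiv q p + ρ * (Rx - condEntXY q) := by
  have h1 : (0:ℝ) < 1 + ρ := by linarith
  set S : Y → ℝ := fun y => ∑ x, p (x, y) ^ (1 / (1 + ρ)) with hS
  have hSpos : ∀ y, 0 < S y := fun y =>
    Finset.sum_pos (fun x _ => Real.rpow_pos_of_pos (hpos _) _) Finset.univ_nonempty
  set Z1 : ℝ := ∑ y, (S y) ^ (1 + ρ) with hZ1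
  have hZ1pos : 0 < Z1 := Finset.sum_pos (fun y _ => Real.rpow_pos_of_pos (hSpos y) _)
    Finset.univ_nonempty
  have hmargnn : ∀ y, 0 ≤ margY q y := fun y => Finset.sum_nonneg fun x _ => hq.1 _
  have hmargsum : ∑ y, margY q y = 1 := by
    simp only [margY]
    rw [← sum_prod_eq q]
    exact hq.2
  -- step 1 : klDiv q p - ρ entropy q = (1+ρ) Σ q log(q/p^β)
  have key : klDiv q p + ρ * (- entropy q) =
      (1 + ρ) * ∑ z, q z * Real.log (q z / p z ^ (1 / (1 + ρ))) := by
    rw [klDiv, entropy, Finset.mul_sum]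
    rw [neg_neg, Finset.mul_sum, ← Finset.sum_add_distrib]
    exact Finset.sum_congr rfl fun z _ => tilt_term (hq.1 z) (hpos z) hρ
  -- step 2 : per-y log-sum
  have step2 : ∑ y, margY q y * Real.log (margY q y / S y) ≤
      ∑ z, q z * Real.log (q z / p z ^ (1 / (1 + ρ))) := by
    rw [sum_prod_eq fun z => q z * Real.log (q z / p z ^ (1 / (1 + ρ)))]
    apply Finset.sum_le_sum
    intro y _
    exact log_sum_ineq (fun x => q (x, y)) (fun x => p (x, y) ^ (1 / (1 + ρ)))
      (fun x => hq.1 _) (fun x => Real.rpow_pos_of_pos (hpos _) _)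
  -- step 3 : pointwise identity in y
  have step3 : ∑ y, ((1 + ρ) * (margY q y * Real.log (margY q y / S y))
      - ρ * (margY q y * Real.log (margY q y))) =
      ∑ y, margY q y * Real.log (margY q y / (S y) ^ (1 + ρ)) :=
    Finset.sum_congr rfl fun y _ => tilt_term2 (hmargnn y) (hSpos y)
  -- step 4 : final log-sum over y
  have step4 := log_sum_ineq (margY q) (fun y => (S y) ^ (1 + ρ)) hmargnn
    (fun y => Real.rpow_pos_of_pos (hSpos y) _)
  rw [hmargsum, ← hZ1, one_mul, one_div, Real.log_inv] at step4
  -- assemble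
  have hent : entropy (margY q) = - ∑ y, margY q y * Real.log (margY q y) := rfl
  have main : - Real.log Z1 ≤ klDiv q p + ρ * (- condEntXY q) := by
    have e1 : klDiv q p + ρ * (- condEntXY q) =
        (klDiv q p + ρ * (- entropy q)) + ρ * entropy (margY q) := by
      rw [condEntXY]; ring
    rw [e1, key, hent]
    have e2 : (1 + ρ) * ∑ z, q z * Real.log (q z / p z ^ (1 / (1 + ρ)))
        + ρ * -∑ y, margY q y * Real.log (margY q y)
        ≥ (1 + ρ) * ∑ y, margY q y * Real.log (margY q y / S y)
        + ρ * -∑ y, margY q y * Real.log (margY q y) := by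
      have := mul_le_mul_of_nonneg_left step2 h1.le
      linarith
    have e3 : (1 + ρ) * ∑ y, margY q y * Real.log (margY q y / S y)
        + ρ * -∑ y, margY q y * Real.log (margY q y)
        = ∑ y, margY q y * Real.log (margY q y / (S y) ^ (1 + ρ)) := by
      rw [← step3, Finset.sum_sub_distrib, ← Finset.mul_sum, ← Finset.mul_sum]
      ring
    have step4' : - Real.log Z1 ≤ ∑ y, margY q y * Real.log (margY q y / (S y) ^ (1 + ρ)) := by
      simpa using step4
    linarith
  rw [Exgy]
  have : (∑ y, (∑ x, p (x, y) ^ (1 / (1 + ρ))) ^ (1 + ρ)) = Z1 := rfl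
  rw [this]
  linarith

section Tilted
variable {X Y : Type*} [Fintype X] [Fintype Y] [Nonempty X] [Nonempty Y]

/-- Tilted joint distribution. -/
def oT (p : X × Y → ℝ) (ρ : ℝ) : X × Y → ℝ :=
  fun z => p z ^ (1 / (1 + ρ)) / ∑ w : X × Y, p w ^ (1 / (1 + ρ))

/-- Tilted conditional-type distribution. -/
def qT (p : X × Y → ℝ) (ρ : ℝ) : X × Y → ℝ :=
  fun z => p z ^ (1 / (1 + ρ)) * (∑ x, p (x, z.2) ^ (1 / (1 + ρ))) ^ ρ /
    ∑ y, (∑ x, p (x, y) ^ (1 / (1 + ρ))) ^ (1 + ρ)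

lemma Z0_pos (p : X × Y → ℝ) (hpos : ∀ z, 0 < p z) (ρ : ℝ) :
    0 < ∑ w : X × Y, p w ^ (1 / (1 + ρ)) :=
  Finset.sum_pos (fun z _ => Real.rpow_pos_of_pos (hpos z) _) Finset.univ_nonempty

lemma S_pos (p : X × Y → ℝ) (hpos : ∀ z, 0 < p z) (ρ : ℝ) (y : Y) :
    0 < ∑ x, p (x, y) ^ (1 / (1 + ρ)) :=
  Finset.sum_pos (fun x _ => Real.rpow_pos_of_pos (hpos _) _) Finset.univ_nonempty

lemma Z1_pos (p : X × Y → ℝ) (hpos : ∀ z, 0 < p z) (ρ : ℝ) :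
    0 < ∑ y, (∑ x, p (x, y) ^ (1 / (1 + ρ))) ^ (1 + ρ) :=
  Finset.sum_pos (fun y _ => Real.rpow_pos_of_pos (S_pos p hpos ρ y) _) Finset.univ_nonempty

lemma oT_pos (p : X × Y → ℝ) (hpos : ∀ z, 0 < p z) (ρ : ℝ) (z : X × Y) : 0 < oT p ρ z :=
  div_pos (Real.rpow_pos_of_pos (hpos z) _) (Z0_pos p hpos ρ)

lemma oT_pmf (p : X × Y → ℝ) (hpos : ∀ z, 0 < p z) (ρ : ℝ) : IsPMF (oT p ρ) := by
  refine ⟨fun z => (oT_pos p hpos ρ z).le, ?_⟩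
  unfold oT
  rw [← Finset.sum_div]
  exact div_self (Z0_pos p hpos ρ).ne'

lemma qT_pos (p : X × Y → ℝ) (hpos : ∀ z, 0 < p z) (ρ : ℝ) (z : X × Y) : 0 < qT p ρ z :=
  div_pos (mul_pos (Real.rpow_pos_of_pos (hpos z) _)
    (Real.rpow_pos_of_pos (S_pos p hpos ρ z.2) _)) (Z1_pos p hpos ρ)

lemma sum_qT_x (p : X × Y → ℝ) (hpos : ∀ z, 0 < p z) (ρ : ℝ) (y : Y) :
    ∑ x, qT p ρ (x, y) = (∑ x, p (x, y) ^ (1 / (1 + ρ))) ^ (1 + ρ) /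
      ∑ y', (∑ x, p (x, y') ^ (1 / (1 + ρ))) ^ (1 + ρ) := by
  unfold qT
  dsimp only
  rw [← Finset.sum_div, ← Finset.sum_mul]
  congr 1
  rw [Real.rpow_add (S_pos p hpos ρ y), Real.rpow_one]

lemma margY_qT (p : X × Y → ℝ) (hpos : ∀ z, 0 < p z) (ρ : ℝ) (y : Y) :
    margY (qT p ρ) y = (∑ x, p (x, y) ^ (1 / (1 + ρ))) ^ (1 + ρ) /
      ∑ y', (∑ x, p (x, y') ^ (1 / (1 + ρ))) ^ (1 + ρ) := by
  unfold margY
  exact sum_qT_x p hpos ρ y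

lemma qT_pmf (p : X × Y → ℝ) (hpos : ∀ z, 0 < p z) (ρ : ℝ) : IsPMF (qT p ρ) := by
  refine ⟨fun z => (qT_pos p hpos ρ z).le, ?_⟩
  rw [sum_prod_eq (qT p ρ)]
  rw [Finset.sum_congr rfl fun y _ => sum_qT_x p hpos ρ y, ← Finset.sum_div]
  exact div_self (Z1_pos p hpos ρ).ne'

end Tilted

section Eq
variable {X Y : Type*} [Fintype X] [Fintype Y] [Nonempty X] [Nonempty Y]

lemma lemA_eq (p : X × Y → ℝ) (hpos : ∀ z, 0 < p z) (Rx Ry ρ : ℝ) (hρ : 0 ≤ ρ) :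
    klDiv (oT p ρ) p + ρ * ((Rx + Ry) - entropy (oT p ρ)) = Exy p Rx Ry ρ := by
  have h1 : (0:ℝ) < 1 + ρ := by linarith
  set Z0 : ℝ := ∑ w : X × Y, p w ^ (1 / (1 + ρ)) with hZ0
  have hZ0pos : 0 < Z0 := Z0_pos p hpos ρ
  set L : ℝ := ∑ z, oT p ρ z * Real.log (p z) with hL
  have hsum1 : ∑ z, oT p ρ z = 1 := (oT_pmf p hpos ρ).2
  have hlog : ∀ z : X × Y, Real.log (oT p ρ z) =
      (1 / (1 + ρ)) * Real.log (p z) - Real.log Z0 := by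
    intro z
    unfold oT
    rw [Real.log_div (Real.rpow_pos_of_pos (hpos z) _).ne' hZ0pos.ne', Real.log_rpow (hpos z)]
  have hkl : klDiv (oT p ρ) p = (1 / (1 + ρ) - 1) * L - Real.log Z0 := by
    rw [klDiv]
    have : ∀ z ∈ Finset.univ, oT p ρ z * Real.log (oT p ρ z / p z) =
        (1 / (1 + ρ) - 1) * (oT p ρ z * Real.log (p z)) - Real.log Z0 * oT p ρ z := by
      intro z _
      rw [Real.log_div (oT_pos p hpos ρ z).ne' (hpos z).ne', hlog z]
      ring
    rw [Finset.sum_congr rfl this, Finset.sum_sub_distrib, ← Finset.mul_sum, ← Finset.mul_sum,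
      hsum1, ← hL, mul_one]
  have hent : entropy (oT p ρ) = -((1 / (1 + ρ)) * L - Real.log Z0) := by
    rw [entropy]
    have : ∀ z ∈ Finset.univ, oT p ρ z * Real.log (oT p ρ z) =
        (1 / (1 + ρ)) * (oT p ρ z * Real.log (p z)) - Real.log Z0 * oT p ρ z := by
      intro z _
      rw [hlog z]; ring
    rw [Finset.sum_congr rfl this, Finset.sum_sub_distrib, ← Finset.mul_sum, ← Finset.mul_sum,
      hsum1, ← hL, mul_one]
  rw [hkl, hent, Exy, ← hZ0]
  field_simp
  ring

lemma lemB_eq (p : X × Y → ℝ) (hpos : ∀ z, 0 < p z) (Rx ρ : ℝ) (hρ : 0 ≤ ρ) :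
    klDiv (qT p ρ) p + ρ * (Rx - condEntXY (qT p ρ)) = Exgy p Rx ρ := by
  have h1 : (0:ℝ) < 1 + ρ := by linarith
  set S : Y → ℝ := fun y => ∑ x, p (x, y) ^ (1 / (1 + ρ)) with hS
  have hSpos : ∀ y, 0 < S y := fun y => S_pos p hpos ρ y
  set Z1 : ℝ := ∑ y, (S y) ^ (1 + ρ) with hZ1
  have hZ1pos : 0 < Z1 := Z1_pos p hpos ρ
  set Lp : ℝ := ∑ z, qT p ρ z * Real.log (p z) with hLp
  set Ls : ℝ := ∑ z, qT p ρ z * Real.log (S z.2) with hLs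
  have hsum1 : ∑ z, qT p ρ z = 1 := (qT_pmf p hpos ρ).2
  have hlog : ∀ z : X × Y, Real.log (qT p ρ z) =
      (1 / (1 + ρ)) * Real.log (p z) + ρ * Real.log (S z.2) - Real.log Z1 := by
    intro z
    unfold qT
    rw [Real.log_div (mul_pos (Real.rpow_pos_of_pos (hpos z) _)
        (Real.rpow_pos_of_pos (hSpos z.2) _)).ne' hZ1pos.ne',
      Real.log_mul (Real.rpow_pos_of_pos (hpos z) _).ne' (Real.rpow_pos_of_pos (hSpos z.2) _).ne',
      Real.log_rpow (hpos z), Real.log_rpow (hSpos z.2)]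
  have hkl : klDiv (qT p ρ) p = (1 / (1 + ρ) - 1) * Lp + ρ * Ls - Real.log Z1 := by
    rw [klDiv]
    have : ∀ z ∈ Finset.univ, qT p ρ z * Real.log (qT p ρ z / p z) =
        ((1 / (1 + ρ) - 1) * (qT p ρ z * Real.log (p z)) + ρ * (qT p ρ z * Real.log (S z.2)))
          - Real.log Z1 * qT p ρ z := by
      intro z _
      rw [Real.log_div (qT_pos p hpos ρ z).ne' (hpos z).ne', hlog z]
      ring
    rw [Finset.sum_congr rfl this, Finset.sum_sub_distrib, Finset.sum_add_distrib,
      ← Finset.mul_sum, ← Finset.mul_sum, ← Finset.mul_sum, hsum1, ← hLp, ← hLs, mul_one]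
  have hentq : entropy (qT p ρ) = -((1 / (1 + ρ)) * Lp + ρ * Ls - Real.log Z1) := by
    rw [entropy]
    have : ∀ z ∈ Finset.univ, qT p ρ z * Real.log (qT p ρ z) =
        ((1 / (1 + ρ)) * (qT p ρ z * Real.log (p z)) + ρ * (qT p ρ z * Real.log (S z.2)))
          - Real.log Z1 * qT p ρ z := by
      intro z _
      rw [hlog z]; ring
    rw [Finset.sum_congr rfl this, Finset.sum_sub_distrib, Finset.sum_add_distrib,
      ← Finset.mul_sum, ← Finset.mul_sum, ← Finset.mul_sum, hsum1, ← hLp, ← hLs, mul_one]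
  have hLs' : ∑ y, margY (qT p ρ) y * Real.log (S y) = Ls := by
    rw [hLs, sum_prod_eq fun z => qT p ρ z * Real.log (S z.2)]
    exact Finset.sum_congr rfl fun y _ => by
      rw [margY, Finset.sum_mul]
  have hmargsum : ∑ y, margY (qT p ρ) y = 1 := by
    simp only [margY]
    rw [← sum_prod_eq (qT p ρ)]
    exact hsum1
  have hmarg : ∀ y, margY (qT p ρ) y = (S y) ^ (1 + ρ) / Z1 := fun y => margY_qT p hpos ρ y
  have hentm : entropy (margY (qT p ρ)) = -((1 + ρ) * Ls - Real.log Z1) := by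
    rw [entropy]
    have : ∀ y ∈ Finset.univ, margY (qT p ρ) y * Real.log (margY (qT p ρ) y) =
        (1 + ρ) * (margY (qT p ρ) y * Real.log (S y)) - Real.log Z1 * margY (qT p ρ) y := by
      intro y _
      conv_lhs => rw [hmarg y]
      rw [Real.log_div (Real.rpow_pos_of_pos (hSpos y) _).ne' hZ1pos.ne',
        Real.log_rpow (hSpos y), hmarg y]
      ring
    rw [Finset.sum_congr rfl this, Finset.sum_sub_distrib, ← Finset.mul_sum, ← Finset.mul_sum,
      hmargsum, hLs', mul_one]
  rw [hkl, condEntXY, hentq, hentm, Exgy]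
  have hZ1' : (∑ y, (∑ x, p (x, y) ^ (1 / (1 + ρ))) ^ (1 + ρ)) = Z1 := rfl
  rw [hZ1']
  field_simp
  ring

end Eq

section Cont
variable {X Y : Type*} [Fintype X] [Fintype Y] [Nonempty X] [Nonempty Y]

lemma cont_recip : ContinuousOn (fun ρ : ℝ => 1 / (1 + ρ)) (Set.Icc 0 1) := by
  apply ContinuousOn.div continuousOn_const
  · exact (continuous_const.add continuous_id).continuousOn
  · intro ρ hρ
    have := hρ.1
    simp only [Set.mem_Icc] at hρ
    intro h
    linarith [hρ.1]

lemma cont_rpow_c (c : ℝ) (hc : 0 < c) :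
    ContinuousOn (fun ρ : ℝ => c ^ (1 / (1 + ρ))) (Set.Icc 0 1) := by
  have : ∀ ρ ∈ Set.Icc (0:ℝ) 1, c ^ (1 / (1 + ρ)) = Real.exp (Real.log c * (1 / (1 + ρ))) := by
    intro ρ _
    rw [Real.rpow_def_of_pos hc]
  apply ContinuousOn.congr _ this
  exact Real.continuous_exp.comp_continuousOn (continuousOn_const.mul cont_recip)

lemma cont_S (p : X × Y → ℝ) (hpos : ∀ z, 0 < p z) (y : Y) :
    ContinuousOn (fun ρ : ℝ => ∑ x, p (x, y) ^ (1 / (1 + ρ))) (Set.Icc 0 1) := by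
  apply continuousOn_finset_sum
  intro x _
  exact cont_rpow_c _ (hpos _)

lemma cont_Z0 (p : X × Y → ℝ) (hpos : ∀ z, 0 < p z) :
    ContinuousOn (fun ρ : ℝ => ∑ w : X × Y, p w ^ (1 / (1 + ρ))) (Set.Icc 0 1) := by
  apply continuousOn_finset_sum
  intro z _
  exact cont_rpow_c _ (hpos _)

lemma cont_oT (p : X × Y → ℝ) (hpos : ∀ z, 0 < p z) (z : X × Y) :
    ContinuousOn (fun ρ : ℝ => oT p ρ z) (Set.Icc 0 1) := by
  unfold oT
  exact ContinuousOn.div (cont_rpow_c _ (hpos z)) (cont_Z0 p hpos)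
    (fun ρ _ => (Z0_pos p hpos ρ).ne')

lemma cont_Spow (p : X × Y → ℝ) (hpos : ∀ z, 0 < p z) (y : Y) (e : ℝ → ℝ)
    (he : ContinuousOn e (Set.Icc 0 1)) :
    ContinuousOn (fun ρ : ℝ => (∑ x, p (x, y) ^ (1 / (1 + ρ))) ^ (e ρ)) (Set.Icc 0 1) := by
  have : ∀ ρ ∈ Set.Icc (0:ℝ) 1, (∑ x, p (x, y) ^ (1 / (1 + ρ))) ^ (e ρ) =
      Real.exp (Real.log (∑ x, p (x, y) ^ (1 / (1 + ρ))) * e ρ) := by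
    intro ρ _
    rw [Real.rpow_def_of_pos (S_pos p hpos ρ y)]
  apply ContinuousOn.congr _ this
  exact Real.continuous_exp.comp_continuousOn
    (((cont_S p hpos y).log (fun ρ _ => (S_pos p hpos ρ y).ne')).mul he)

lemma cont_Z1 (p : X × Y → ℝ) (hpos : ∀ z, 0 < p z) :
    ContinuousOn (fun ρ : ℝ => ∑ y, (∑ x, p (x, y) ^ (1 / (1 + ρ))) ^ (1 + ρ)) (Set.Icc 0 1) := by
  apply continuousOn_finset_sum
  intro y _
  exact cont_Spow p hpos y _ (continuous_const.add continuous_id).continuousOn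

lemma cont_qT (p : X × Y → ℝ) (hpos : ∀ z, 0 < p z) (z : X × Y) :
    ContinuousOn (fun ρ : ℝ => qT p ρ z) (Set.Icc 0 1) := by
  unfold qT
  exact ContinuousOn.div
    ((cont_rpow_c _ (hpos z)).mul (cont_Spow p hpos z.2 _ continuousOn_id))
    (cont_Z1 p hpos) (fun ρ _ => (Z1_pos p hpos ρ).ne')

lemma cont_entropy_oT (p : X × Y → ℝ) (hpos : ∀ z, 0 < p z) :
    ContinuousOn (fun ρ : ℝ => entropy (oT p ρ)) (Set.Icc 0 1) := by
  simp only [entropy]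
  apply ContinuousOn.neg
  apply continuousOn_finset_sum
  intro z _
  exact (cont_oT p hpos z).mul ((cont_oT p hpos z).log (fun ρ _ => (oT_pos p hpos ρ z).ne'))

lemma cont_entropy_qT (p : X × Y → ℝ) (hpos : ∀ z, 0 < p z) :
    ContinuousOn (fun ρ : ℝ => entropy (qT p ρ)) (Set.Icc 0 1) := by
  simp only [entropy]
  apply ContinuousOn.neg
  apply continuousOn_finset_sum
  intro z _
  exact (cont_qT p hpos z).mul ((cont_qT p hpos z).log (fun ρ _ => (qT_pos p hpos ρ z).ne'))

lemma cont_margY_qT (p : X × Y → ℝ) (hpos : ∀ z, 0 < p z) (y : Y) :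
    ContinuousOn (fun ρ : ℝ => margY (qT p ρ) y) (Set.Icc 0 1) := by
  simp only [margY]
  apply continuousOn_finset_sum
  intro x _
  exact cont_qT p hpos (x, y)

lemma margY_qT_pos (p : X × Y → ℝ) (hpos : ∀ z, 0 < p z) (ρ : ℝ) (y : Y) :
    0 < margY (qT p ρ) y :=
  Finset.sum_pos (fun x _ => qT_pos p hpos ρ (x, y)) Finset.univ_nonempty

lemma cont_condEnt_qT (p : X × Y → ℝ) (hpos : ∀ z, 0 < p z) :
    ContinuousOn (fun ρ : ℝ => condEntXY (qT p ρ)) (Set.Icc 0 1) := by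
  simp only [condEntXY]
  apply ContinuousOn.sub (cont_entropy_qT p hpos)
  simp only [entropy]
  apply ContinuousOn.neg
  apply continuousOn_finset_sum
  intro y _
  exact (cont_margY_qT p hpos y).mul
    ((cont_margY_qT p hpos y).log (fun ρ _ => (margY_qT_pos p hpos ρ y).ne'))

end Cont

section Final
variable {X Y : Type*} [Fintype X] [Fintype Y] [Nonempty X] [Nonempty Y]

lemma oT_zero (p : X × Y → ℝ) (hp : IsPMF p) : oT p 0 = p := by
  funext z
  unfold oT
  norm_num
  rw [hp.2, div_one]

lemma qT_zero (p : X × Y → ℝ) (hp : IsPMF p) (hpos : ∀ z, 0 < p z) : qT p 0 = p := by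
  funext z
  unfold qT
  norm_num
  have h1 : ∀ w : X × Y, p w ^ (1:ℝ) = p w := fun w => Real.rpow_one (p w)
  have h2 : (∑ x, p (x, z.2) ^ (1:ℝ)) ^ (0:ℝ) = 1 := by
    rw [Real.rpow_zero]
  rw [← sum_prod_eq p, hp.2, div_one]


end Final

/-- Lemma (appendix): the ML and universal exponents agree,
`E_x^{ML}(R_x,R_y,γ) = E_x^{UN}(R_x,R_y,γ)` for all `γ ∈ [0,1]`. -/
theorem statement11 {X Y : Type*} [Fintype X] [Fintype Y] [Nonempty X] [Nonempty Y]
    (p : X × Y → ℝ) (hp : IsPMF p) (hpos : ∀ z, 0 < p z)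
    (Rx Ry : ℝ)
    (hx : condEntXY p < Rx) (hy : condEntYX p < Ry) (hxy : entropy p < Rx + Ry)
    (γ : ℝ) (hγ : γ ∈ Set.Icc (0 : ℝ) 1) :
    sSup ((fun ρ : ℝ => γ * Exgy p Rx ρ + (1 - γ) * Exy p Rx Ry ρ) '' Set.Icc 0 1) =
      sInf ((fun qo : (X × Y → ℝ) × (X × Y → ℝ) =>
          γ * klDiv qo.1 p + (1 - γ) * klDiv qo.2 p +
            max 0 (γ * (Rx - condEntXY qo.1) + (1 - γ) * (Rx + Ry - entropy qo.2))) ''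
        {qo | IsPMF qo.1 ∧ IsPMF qo.2}) := by
  obtain ⟨hγ0, hγ1⟩ := hγ
  set F : ℝ → ℝ := fun ρ => γ * Exgy p Rx ρ + (1 - γ) * Exy p Rx Ry ρ with hF
  set G : (X × Y → ℝ) × (X × Y → ℝ) → ℝ := fun qo =>
      γ * klDiv qo.1 p + (1 - γ) * klDiv qo.2 p +
        max 0 (γ * (Rx - condEntXY qo.1) + (1 - γ) * (Rx + Ry - entropy qo.2)) with hG
  -- the key inequality
  have key : ∀ ρ ∈ Set.Icc (0:ℝ) 1, ∀ qo : (X × Y → ℝ) × (X × Y → ℝ),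
      IsPMF qo.1 → IsPMF qo.2 → F ρ ≤ G qo := by
    rintro ρ ⟨hρ0, hρ1⟩ ⟨q, o⟩ hq ho
    have h1 := lemB_le p hpos Rx ρ hρ0 q hq
    have h2 := lemA_le p hpos Rx Ry ρ hρ0 o ho
    have h3 := mul_le_mul_of_nonneg_left h1 hγ0
    have h4 := mul_le_mul_of_nonneg_left h2 (by linarith : (0:ℝ) ≤ 1 - γ)
    set A : ℝ := γ * (Rx - condEntXY q) + (1 - γ) * ((Rx + Ry) - entropy o) with hA
    have h5 : ρ * A ≤ max 0 A := by
      rcases le_or_gt 0 A with h | h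
      · calc ρ * A ≤ 1 * A := mul_le_mul_of_nonneg_right hρ1 h
          _ = A := one_mul A
          _ ≤ max 0 A := le_max_right 0 A
      · calc ρ * A ≤ 0 := mul_nonpos_of_nonneg_of_nonpos hρ0 h.le
          _ ≤ max 0 A := le_max_left 0 A
    simp only [hF, hG, hA] at *
    have e : γ * (klDiv q p + ρ * (Rx - condEntXY q)) +
        (1 - γ) * (klDiv o p + ρ * ((Rx + Ry) - entropy o)) =
        γ * klDiv q p + (1 - γ) * klDiv o p +
          ρ * (γ * (Rx - condEntXY q) + (1 - γ) * ((Rx + Ry) - entropy o)) := by ring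
    have h6 : γ * (Rx - condEntXY q) + (1 - γ) * (Rx + Ry - entropy o) =
        γ * (Rx - condEntXY q) + (1 - γ) * ((Rx + Ry) - entropy o) := by ring
    rw [h6]
    linarith
  have hSne : ((fun ρ => F ρ) '' Set.Icc 0 1).Nonempty :=
    ⟨F 0, ⟨0, by simp, rfl⟩⟩
  have hppmf : IsPMF p := hp
  have hTne : (G '' {qo : (X × Y → ℝ) × (X × Y → ℝ) | IsPMF qo.1 ∧ IsPMF qo.2}).Nonempty :=
    ⟨G (p, p), ⟨(p, p), ⟨hppmf, hppmf⟩, rfl⟩⟩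
  have hbddS : BddAbove ((fun ρ => F ρ) '' Set.Icc 0 1) := by
    refine ⟨G (p, p), ?_⟩
    rintro s ⟨ρ, hρ, rfl⟩
    exact key ρ hρ (p, p) hppmf hppmf
  have hbddT : BddBelow (G '' {qo : (X × Y → ℝ) × (X × Y → ℝ) | IsPMF qo.1 ∧ IsPMF qo.2}) := by
    refine ⟨F 0, ?_⟩
    rintro t ⟨qo, hqo, rfl⟩
    exact key 0 (by simp) qo hqo.1 hqo.2
  -- direction 1 : sSup ≤ sInf
  have dir1 : sSup ((fun ρ => F ρ) '' Set.Icc 0 1) ≤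
      sInf (G '' {qo : (X × Y → ℝ) × (X × Y → ℝ) | IsPMF qo.1 ∧ IsPMF qo.2}) := by
    apply csSup_le hSne
    rintro s ⟨ρ, hρ, rfl⟩
    apply le_csInf hTne
    rintro t ⟨qo, hqo, rfl⟩
    exact key ρ hρ qo hqo.1 hqo.2
  -- direction 2
  set Afun : ℝ → ℝ := fun ρ =>
    γ * (Rx - condEntXY (qT p ρ)) + (1 - γ) * (Rx + Ry - entropy (oT p ρ)) with hAfun
  have contA : ContinuousOn Afun (Set.Icc 0 1) := by
    apply ContinuousOn.add
    · exact continuousOn_const.mul (continuousOn_const.sub (cont_condEnt_qT p hpos))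
    · exact continuousOn_const.mul (continuousOn_const.sub (cont_entropy_oT p hpos))
  have hA0 : 0 < Afun 0 := by
    have e1 : qT p 0 = p := qT_zero p hp hpos
    have e2 : oT p 0 = p := oT_zero p hp
    simp only [hAfun, e1, e2]
    have ha : 0 < Rx - condEntXY p := by linarith
    have hb : 0 < Rx + Ry - entropy p := by linarith
    nlinarith [mul_nonneg hγ0 (sub_nonneg.mpr (min_le_left (Rx - condEntXY p) (Rx + Ry - entropy p))),
      mul_nonneg (by linarith : (0:ℝ) ≤ 1 - γ)
        (sub_nonneg.mpr (min_le_right (Rx - condEntXY p) (Rx + Ry - entropy p))),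
      lt_min ha hb]
  -- find ρ* with either ρ* = 1 ∧ 0 ≤ A 1, or A ρ* = 0
  have hstar : ∃ ρ' ∈ Set.Icc (0:ℝ) 1, max 0 (Afun ρ') = ρ' * Afun ρ' := by
    rcases le_or_gt 0 (Afun 1) with h | h
    · exact ⟨1, by simp, by rw [max_eq_right h, one_mul]⟩
    · have h0 : (0:ℝ) ∈ Set.Icc (Afun 1) (Afun 0) := ⟨h.le, hA0.le⟩
      have := intermediate_value_Icc' (by norm_num : (0:ℝ) ≤ 1) contA h0
      obtain ⟨ρ', hρ', hval⟩ := this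
      exact ⟨ρ', hρ', by rw [hval, max_self, mul_zero]⟩
  obtain ⟨ρ', hρ'mem, hρ'max⟩ := hstar
  have hGval : G (qT p ρ', oT p ρ') = F ρ' := by
    simp only [hG, hF]
    have hAe : γ * (Rx - condEntXY (qT p ρ')) + (1 - γ) * (Rx + Ry - entropy (oT p ρ')) =
        Afun ρ' := rfl
    rw [hAe, hρ'max]
    have e1 := lemB_eq p hpos Rx ρ' hρ'mem.1
    have e2 := lemA_eq p hpos Rx Ry ρ' hρ'mem.1
    rw [← e1, ← e2]
    simp only [hAfun]
    ring
  have dir2 : sInf (G '' {qo : (X × Y → ℝ) × (X × Y → ℝ) | IsPMF qo.1 ∧ IsPMF qo.2}) ≤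
      sSup ((fun ρ => F ρ) '' Set.Icc 0 1) := by
    calc sInf (G '' {qo : (X × Y → ℝ) × (X × Y → ℝ) | IsPMF qo.1 ∧ IsPMF qo.2})
        ≤ G (qT p ρ', oT p ρ') := csInf_le hbddT
          ⟨(qT p ρ', oT p ρ'), ⟨qT_pmf p hpos ρ', oT_pmf p hpos ρ'⟩, rfl⟩
      _ = F ρ' := hGval
      _ ≤ sSup ((fun ρ => F ρ) '' Set.Icc 0 1) := le_csSup hbddS ⟨ρ', hρ'mem, rfl⟩
  exact le_antisymm dir1 dir2
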